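/- Let K be a finite pure d-dimensional simplicial complex, A ⊆ V an independent set (|A ∩ F| ≤ d for every face F), m_{d-1} the minimum number of d-faces containing a (d−1)-face. Then for every i-face F with all vertices in A and 0 ≤ i ≤ d−1, the number of (i+1)-faces containing F and meeting V∖A is at least m_{d-1}. In particular, every vertex v ∈ A has at least m_{d-1} neighbors in V∖A, so the number of edges between A and V∖A is at least |A|·m_{d-1}. -/

import Mathlib

/-- In a finite pure `d`-dimensional simplicial complex, if `A` is an independent set and
`m` is the minimum number of `d`-faces containing a `(d-1)`-face, then every `i`-face with
all vertices in `A` (`0 ≤ i ≤ d-1`) is contained in at least `m` `(i+1)`-faces meeting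
`V ∖ A`; in particular each vertex of `A` has at least `m` neighbours outside `A`, so
`|E(A, Aᶜ)| ≥ |A| · m`. -/
theorem stmt14 {V : Type*} [DecidableEq V] [Fintype V] (K : Finset (Finset V)) (d : ℕ)
    (hd : 1 ≤ d)
    (hdown : ∀ F ∈ K, ∀ G ⊆ F, G ∈ K)
    (hvert : ∀ v : V, {v} ∈ K)
    (hdim : ∀ F ∈ K, F.card ≤ d + 1)
    (hpure : ∀ F ∈ K, ∃ G ∈ K, F ⊆ G ∧ G.card = d + 1)
    (A : Finset V) (hA : ∀ F ∈ K, (A ∩ F).card ≤ d)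
    (m : ℕ)
    (hm : ∀ F ∈ K, F.card = d →
      m ≤ (K.filter fun G => G.card = d + 1 ∧ F ⊆ G).card) :
    (∀ i : ℕ, i + 1 ≤ d → ∀ F ∈ K, F.card = i + 1 → F ⊆ A →
        m ≤ (K.filter fun G => G.card = i + 2 ∧ F ⊆ G ∧ ¬ G ⊆ A).card) ∧
      A.card * m ≤ (K.filter fun e => e.card = 2 ∧ (e ∩ A).card = 1).card := by
  -- Auxiliary counting lemma (no independence condition): every `i`-face is
  -- contained in at least `m` `(i+1)`-faces. Downward induction, phrased as
  -- induction on `k = d - (i+1)`.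
  have lemL : ∀ k i, i + 1 + k = d → ∀ F ∈ K, F.card = i + 1 →
      m ≤ (K.filter fun G => G.card = i + 2 ∧ F ⊆ G).card := by
    intro k
    induction k with
    | zero =>
      intro i hik F hF hcard
      have hid : i + 1 = d := by omega
      subst hid
      exact hm F hF hcard
    | succ k ih =>
      intro i hik F hF hcard
      obtain ⟨G0, hG0K, hFG0, hG0card⟩ := hpure F hF
      obtain ⟨F', hFF', hF'G0, hF'card⟩ :=
        Finset.exists_subsuperset_card_eq hFG0 (by omega : F.card ≤ i + 2)
          (by omega : i + 2 ≤ G0.card)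
      have hF'K : F' ∈ K := hdown G0 hG0K F' hF'G0
      have ihF' := ih (i + 1) (by omega) F' hF'K (by omega)
      obtain ⟨w, hw⟩ : ∃ w, F' \ F = {w} :=
        Finset.card_eq_one.mp (by rw [Finset.card_sdiff_of_subset hFF']; omega)
      have hwF' : w ∈ F' := (Finset.mem_sdiff.mp (hw ▸ Finset.mem_singleton_self w)).1
      have hwF : w ∉ F := (Finset.mem_sdiff.mp (hw ▸ Finset.mem_singleton_self w)).2
      refine ihF'.trans (Finset.card_le_card_of_injOn (fun G => G.erase w) ?_ ?_)
      · intro G hG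
        simp only [Finset.mem_coe, Finset.mem_filter] at hG ⊢
        obtain ⟨hGK, hGc, hF'G⟩ := hG
        have hwG : w ∈ G := hF'G hwF'
        refine ⟨hdown G hGK _ (Finset.erase_subset w G), ?_, ?_⟩
        · rw [Finset.card_erase_of_mem hwG]; omega
        · intro x hx
          exact Finset.mem_erase.mpr ⟨fun h => hwF (h ▸ hx), hF'G (hFF' hx)⟩
      · intro G1 hG1 G2 hG2 hEq
        simp only [Finset.coe_filter, Set.mem_setOf_eq] at hG1 hG2
        have h1 : w ∈ G1 := hG1.2.2 hwF'
        have h2 : w ∈ G2 := hG2.2.2 hwF'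
        rw [← Finset.insert_erase h1, ← Finset.insert_erase h2]
        exact congrArg (insert w) hEq
  -- Main claim: downward induction with the independence condition.
  have lemA : ∀ k i, i + 1 + k = d → ∀ F ∈ K, F.card = i + 1 → F ⊆ A →
      m ≤ (K.filter fun G => G.card = i + 2 ∧ F ⊆ G ∧ ¬ G ⊆ A).card := by
    intro k
    induction k with
    | zero =>
      intro i hik F hF hcard hFA
      have hid : i + 1 = d := by omega
      subst hid
      refine (hm F hF hcard).trans (Finset.card_le_card ?_)
      intro G hG
      simp only [Finset.mem_filter] at hG ⊢
      obtain ⟨hGK, hGc, hFG⟩ := hG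
      refine ⟨hGK, hGc, hFG, fun hGA => ?_⟩
      have hAG := hA G hGK
      rw [Finset.inter_eq_right.mpr hGA, hGc] at hAG
      omega
    | succ k ih =>
      intro i hik F hF hcard hFA
      by_cases hex : ∃ F' ∈ K, F'.card = i + 2 ∧ F ⊆ F' ∧ F' ⊆ A
      · obtain ⟨F', hF'K, hF'card, hFF', hF'A⟩ := hex
        have ihF' := ih (i + 1) (by omega) F' hF'K (by omega) hF'A
        obtain ⟨w, hw⟩ : ∃ w, F' \ F = {w} :=
          Finset.card_eq_one.mp (by rw [Finset.card_sdiff_of_subset hFF']; omega)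
        have hwF' : w ∈ F' := (Finset.mem_sdiff.mp (hw ▸ Finset.mem_singleton_self w)).1
        have hwF : w ∉ F := (Finset.mem_sdiff.mp (hw ▸ Finset.mem_singleton_self w)).2
        have hwA : w ∈ A := hF'A hwF'
        refine ihF'.trans (Finset.card_le_card_of_injOn (fun G => G.erase w) ?_ ?_)
        · intro G hG
          simp only [Finset.mem_coe, Finset.mem_filter] at hG ⊢
          obtain ⟨hGK, hGc, hF'G, hGA⟩ := hG
          have hwG : w ∈ G := hF'G hwF'
          refine ⟨hdown G hGK _ (Finset.erase_subset w G), ?_, ?_, ?_⟩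
          · rw [Finset.card_erase_of_mem hwG]; omega
          · intro x hx
            exact Finset.mem_erase.mpr ⟨fun h => hwF (h ▸ hx), hF'G (hFF' hx)⟩
          · intro hsub
            apply hGA
            intro x hx
            by_cases hxw : x = w
            · exact hxw ▸ hwA
            · exact hsub (Finset.mem_erase.mpr ⟨hxw, hx⟩)
        · intro G1 hG1 G2 hG2 hEq
          simp only [Finset.coe_filter, Set.mem_setOf_eq] at hG1 hG2
          have h1 : w ∈ G1 := hG1.2.2.1 hwF'
          have h2 : w ∈ G2 := hG2.2.2.1 hwF'
          rw [← Finset.insert_erase h1, ← Finset.insert_erase h2]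
          exact congrArg (insert w) hEq
      · refine (lemL (k + 1) i hik F hF hcard).trans (Finset.card_le_card ?_)
        intro G hG
        simp only [Finset.mem_filter] at hG ⊢
        obtain ⟨hGK, hGc, hFG⟩ := hG
        exact ⟨hGK, hGc, hFG, fun hGA => hex ⟨G, hGK, hGc, hFG, hGA⟩⟩
  have first : ∀ i : ℕ, i + 1 ≤ d → ∀ F ∈ K, F.card = i + 1 → F ⊆ A →
      m ≤ (K.filter fun G => G.card = i + 2 ∧ F ⊆ G ∧ ¬ G ⊆ A).card :=
    fun i hi F hF hc hFA => lemA (d - (i + 1)) i (by omega) F hF hc hFA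
  refine ⟨first, ?_⟩
  -- Edge count. For each `v ∈ A`, the set of edges at `v` leaving `A`.
  set S : V → Finset (Finset V) :=
    fun v => K.filter fun e => e.card = 2 ∧ ({v} : Finset V) ⊆ e ∧ ¬ e ⊆ A with hS
  have hSv : ∀ v ∈ A, m ≤ (S v).card := by
    intro v hv
    exact first 0 hd {v} (hvert v) (Finset.card_singleton v)
      (Finset.singleton_subset_iff.mpr hv)
  have hSsub : ∀ v ∈ A, S v ⊆ K.filter fun e => e.card = 2 ∧ (e ∩ A).card = 1 := by
    intro v hv e he
    simp only [hS, Finset.mem_filter, Finset.singleton_subset_iff] at he ⊢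
    obtain ⟨heK, hec, hve, heA⟩ := he
    refine ⟨heK, hec, ?_⟩
    obtain ⟨u, hue, huA⟩ := Finset.not_subset.mp heA
    have h1 : e ∩ A ⊆ e.erase u := by
      intro x hx
      rw [Finset.mem_inter] at hx
      exact Finset.mem_erase.mpr ⟨fun h => huA (h ▸ hx.2), hx.1⟩
    have h2 : (e.erase u).card = 1 := by rw [Finset.card_erase_of_mem hue]; omega
    have h3 : (e ∩ A).card ≤ 1 := h2 ▸ Finset.card_le_card h1
    have h4 : 0 < (e ∩ A).card :=
      Finset.card_pos.mpr ⟨v, Finset.mem_inter.mpr ⟨hve, hv⟩⟩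
    omega
  have hdisj : ∀ v ∈ A, ∀ v' ∈ A, v ≠ v' → Disjoint (S v) (S v') := by
    intro v hv v' hv' hne
    rw [Finset.disjoint_left]
    intro e he he'
    simp only [hS, Finset.mem_filter, Finset.singleton_subset_iff] at he he'
    obtain ⟨heK, hec, hve, heA⟩ := he
    obtain ⟨-, -, hv'e, -⟩ := he'
    have hsub : ({v, v'} : Finset V) ⊆ e := by
      intro x hx
      rcases Finset.mem_insert.mp hx with h | h
      · exact h ▸ hve
      · exact (Finset.mem_singleton.mp h) ▸ hv'e
    have hcard2 : ({v, v'} : Finset V).card = 2 := Finset.card_pair hne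
    have : e = {v, v'} := (Finset.eq_of_subset_of_card_le hsub (by omega)).symm
    apply heA
    rw [this]
    intro x hx
    rcases Finset.mem_insert.mp hx with h | h
    · exact h ▸ hv
    · exact (Finset.mem_singleton.mp h) ▸ hv'
  calc A.card * m = ∑ _v ∈ A, m := by rw [Finset.sum_const, smul_eq_mul]
    _ ≤ ∑ v ∈ A, (S v).card := Finset.sum_le_sum hSv
    _ = (A.biUnion S).card := (Finset.card_biUnion hdisj).symm
    _ ≤ (K.filter fun e => e.card = 2 ∧ (e ∩ A).card = 1).card := by
        apply Finset.card_le_card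
        intro e he
        obtain ⟨v, hv, hev⟩ := Finset.mem_biUnion.mp he
        exact hSsub v hv hev
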